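/- There exist two ultrametric spaces (X, d_X) and (Y, d_Y) that are weakly similar (hence have isomorphic ordinal types) but are not homeomorphic. Concretely: let (xₙ)ₙ≥1 be a strictly decreasing sequence of positive reals with xₙ → 0, let X = {0} ∪ {xₙ : n ≥ 1} with d_X(u,v) = max(u,v) for u ≠ v and 0 otherwise; let (yₙ)ₙ≥1 be strictly decreasing with yₙ → p > 0, let Y = {p} ∪ {yₙ : n ≥ 1} ⊂ ℝ with d_Y(u,v) = max(u,v) for u ≠ v and 0 otherwise. Then d_X and d_Y are ultrametrics, the map sending 0 ↦ p and xₙ ↦ yₙ together with f(0)=0, f(xₙ)=yₙ is a weak similarity, X has the limit point 0 while Y is discrete, so X and Y are not homeomorphic. -/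

import Mathlib

/-- Auxiliary: the distance `max u v` on a set of nonnegative reals is an ultrametric. -/
lemma maxdist_props (S : Set ℝ) (hS : ∀ a ∈ S, (0:ℝ) ≤ a)
    (d : ↥S → ↥S → ℝ) (hd : ∀ u v, d u v = if u = v then 0 else max u.1 v.1) :
    (∀ u v, d u v = d v u) ∧ (∀ u v, d u v = 0 ↔ u = v) ∧
      (∀ u v w, d u w ≤ max (d u v) (d v w)) := by
  have hnn : ∀ u : ↥S, (0:ℝ) ≤ u.1 := fun u => hS u.1 u.2
  refine ⟨fun u v => ?_, fun u v => ?_, fun u v w => ?_⟩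
  · rw [hd, hd]
    rcases eq_or_ne u v with rfl | h
    · rfl
    · rw [if_neg h, if_neg h.symm, max_comm]
  · rw [hd]
    rcases eq_or_ne u v with rfl | h
    · simp
    · rw [if_neg h]
      simp only [h, iff_false]
      intro h0
      apply h
      have hu : u.1 = 0 := le_antisymm (h0 ▸ le_max_left _ _) (hnn u)
      have hv : v.1 = 0 := le_antisymm (h0 ▸ le_max_right _ _) (hnn v)
      exact Subtype.ext (hu.trans hv.symm)
  · rw [hd, hd, hd]
    rcases eq_or_ne u w with rfl | huw
    · rw [if_pos rfl]
      rcases eq_or_ne u v with rfl | h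
      · simp
      · rw [if_neg h, if_neg h.symm]
        exact le_max_of_le_left (le_max_of_le_left (hnn u))
    · rw [if_neg huw]
      rcases eq_or_ne u v with rfl | huv
      · rw [if_pos rfl, if_neg huw]
        exact le_max_right _ _
      · rcases eq_or_ne v w with rfl | hvw
        · rw [if_neg huv, if_pos rfl]
          exact le_max_left _ _
        · rw [if_neg huv, if_neg hvw]
          exact max_le (le_max_of_le_left (le_max_left _ _))
            (le_max_of_le_right (le_max_right _ _))

/-- The map `0 ↦ p`, `xₙ ↦ yₙ` between the two spaces. -/
noncomputable def psiAux (x y : ℕ → ℝ) (p : ℝ) :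
    ↥(insert (0:ℝ) (Set.range x)) → ↥(insert p (Set.range y)) :=
  fun u => if u.1 = 0 then ⟨p, Set.mem_insert _ _⟩
    else ⟨y (Function.invFun x u.1), Set.mem_insert_of_mem _ ⟨_, rfl⟩⟩

/-- The scaling function `0 ↦ 0`, `xₙ ↦ yₙ` on the reals. -/
noncomputable def fAux (x y : ℕ → ℝ) (r : ℝ) : ℝ :=
  if r = 0 then 0 else y (Function.invFun x r)

lemma psiAux_spec (x y : ℕ → ℝ) (p : ℝ) (hxinj : Function.Injective x)
    (hxpos : ∀ n, 0 < x n) (u : ↥(insert (0:ℝ) (Set.range x))) :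
    (u.1 = 0 ∧ (psiAux x y p u).1 = p) ∨ ∃ n, u.1 = x n ∧ (psiAux x y p u).1 = y n := by
  rcases u.2 with h | ⟨n, hn⟩
  · exact Or.inl ⟨h, by simp only [psiAux, if_pos h]⟩
  · refine Or.inr ⟨n, hn.symm, ?_⟩
    have hne : u.1 ≠ 0 := hn ▸ (hxpos n).ne'
    simp only [psiAux, if_neg hne]
    rw [← hn, Function.leftInverse_invFun hxinj n]

lemma fAux_zero (x y : ℕ → ℝ) : fAux x y 0 = 0 := if_pos rfl

lemma fAux_x (x y : ℕ → ℝ) (hxinj : Function.Injective x)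
    (hxpos : ∀ n, 0 < x n) (n : ℕ) : fAux x y (x n) = y n := by
  simp only [fAux, if_neg (hxpos n).ne']
  rw [Function.leftInverse_invFun hxinj n]

/-- Example: two ultrametric spaces that are weakly similar (hence have isomorphic ordinal
types) but are not homeomorphic.  `X = {0} ∪ {xₙ}` with `xₙ ↓ 0` and `Y = {p} ∪ {yₙ}` with
`yₙ ↓ p > 0`, each with the distance `max` of the two points for distinct points:
both are ultrametrics, they are weakly similar, `0` is a limit point of `X`, `Y` is
discrete, and there is no homeomorphism between them. -/
theorem ultrametric_weakly_similar_not_homeomorphic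
    (x y : ℕ → ℝ) (p : ℝ)
    (hxa : StrictAnti x) (hxpos : ∀ n, 0 < x n)
    (hx0 : Filter.Tendsto x Filter.atTop (nhds 0))
    (hya : StrictAnti y)
    (hyp : Filter.Tendsto y Filter.atTop (nhds p)) (hp : 0 < p)
    (dX : ↥(insert (0 : ℝ) (Set.range x)) → ↥(insert (0 : ℝ) (Set.range x)) → ℝ)
    (dY : ↥(insert p (Set.range y)) → ↥(insert p (Set.range y)) → ℝ)
    (hdX : ∀ u v, dX u v = if u = v then 0 else max u.1 v.1)
    (hdY : ∀ u v, dY u v = if u = v then 0 else max u.1 v.1) :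
    ((∀ u v, dX u v = dX v u) ∧ (∀ u v, dX u v = 0 ↔ u = v) ∧
      (∀ u v w, dX u w ≤ max (dX u v) (dX v w))) ∧
    ((∀ u v, dY u v = dY v u) ∧ (∀ u v, dY u v = 0 ↔ u = v) ∧
      (∀ u v w, dY u w ≤ max (dY u v) (dY v w))) ∧
    (∃ (Φ : ↥(insert (0 : ℝ) (Set.range x)) ≃ ↥(insert p (Set.range y))) (f : ℝ → ℝ),
      StrictMonoOn f {r | ∃ u v, dX u v = r} ∧
      f '' {r | ∃ u v, dX u v = r} = {r | ∃ u v, dY u v = r} ∧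
      ∀ u v, f (dX u v) = dY (Φ u) (Φ v)) ∧
    (∀ ε : ℝ, 0 < ε → ∃ u : ↥(insert (0 : ℝ) (Set.range x)),
      u ≠ ⟨0, Set.mem_insert 0 _⟩ ∧ dX u ⟨0, Set.mem_insert 0 _⟩ < ε) ∧
    (∀ v : ↥(insert p (Set.range y)), ∃ ε : ℝ, 0 < ε ∧
      ∀ w : ↥(insert p (Set.range y)), dY v w < ε → w = v) ∧
    ¬ ∃ Φ : ↥(insert (0 : ℝ) (Set.range x)) ≃ ↥(insert p (Set.range y)),
        (∀ a, ∀ ε : ℝ, 0 < ε → ∃ η : ℝ, 0 < η ∧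
          ∀ u, dX u a < η → dY (Φ u) (Φ a) < ε) ∧
        (∀ b, ∀ ε : ℝ, 0 < ε → ∃ η : ℝ, 0 < η ∧
          ∀ v, dY v b < η → dX (Φ.symm v) (Φ.symm b) < ε) := by
  have hxinj : Function.Injective x := hxa.injective
  have hyinj : Function.Injective y := hya.injective
  -- every `y n` is strictly above the limit `p`
  have hygt : ∀ n, p < y n := by
    intro n
    have h1 : p ≤ y (n + 1) :=
      le_of_tendsto hyp (Filter.eventually_atTop.2 ⟨n + 1, fun m hm => hya.antitone hm⟩)
    exact lt_of_le_of_lt h1 (hya (Nat.lt_succ_self n))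
  have hXnn : ∀ a ∈ insert (0:ℝ) (Set.range x), (0:ℝ) ≤ a := by
    rintro a (rfl | ⟨n, rfl⟩)
    · exact le_refl 0
    · exact (hxpos n).le
  have hYge : ∀ v : ↥(insert p (Set.range y)), p ≤ v.1 := by
    rintro ⟨v, hv | ⟨n, rfl⟩⟩
    · exact le_of_eq hv.symm
    · exact (hygt n).le
  have hYnn : ∀ a ∈ insert p (Set.range y), (0:ℝ) ≤ a :=
    fun a ha => le_trans hp.le (hYge ⟨a, ha⟩)
  -- the two ultrametric statements
  have hXprops := maxdist_props _ hXnn dX hdX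
  have hYprops := maxdist_props _ hYnn dY hdY
  -- the zero point of X and the point p of Y
  have hz : (0:ℝ) ∈ insert (0:ℝ) (Set.range x) := Set.mem_insert _ _
  -- ψ is a bijection
  have hψx : ∀ n (h : x n ∈ insert (0:ℝ) (Set.range x)),
      psiAux x y p ⟨x n, h⟩ = ⟨y n, Set.mem_insert_of_mem _ ⟨n, rfl⟩⟩ := by
    intro n h
    rcases psiAux_spec x y p hxinj hxpos ⟨x n, h⟩ with ⟨h0, _⟩ | ⟨m, hm, hv⟩
    · exact absurd h0 (hxpos n).ne'
    · have : m = n := hxinj hm.symm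
      subst this
      exact Subtype.ext hv
  have hψ0 : psiAux x y p ⟨0, hz⟩ = ⟨p, Set.mem_insert _ _⟩ := by
    simp [psiAux]
  have hψbij : Function.Bijective (psiAux x y p) := by
    constructor
    · intro u v huv
      rcases psiAux_spec x y p hxinj hxpos u with ⟨hu0, hup⟩ | ⟨n, hun, huy⟩ <;>
        rcases psiAux_spec x y p hxinj hxpos v with ⟨hv0, hvp⟩ | ⟨m, hvm, hvy⟩
      all_goals have hvv := congrArg Subtype.val huv
      · exact Subtype.ext (hu0.trans hv0.symm)
      · exfalso
        rw [hup, hvy] at hvv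
        exact (hygt m).ne hvv
      · exfalso
        rw [huy, hvp] at hvv
        exact (hygt n).ne hvv.symm
      · rw [huy, hvy] at hvv
        exact Subtype.ext (hun.trans ((hyinj hvv) ▸ hvm.symm))
    · rintro ⟨v, hv | ⟨n, rfl⟩⟩
      · refine ⟨⟨0, hz⟩, ?_⟩
        rw [hψ0]
        exact Subtype.ext hv.symm
      · exact ⟨⟨x n, Set.mem_insert_of_mem _ ⟨n, rfl⟩⟩, hψx n _⟩
  -- limit point statement (used twice)
  have hlim : ∀ ε : ℝ, 0 < ε → ∃ u : ↥(insert (0 : ℝ) (Set.range x)),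
      u ≠ ⟨0, Set.mem_insert 0 _⟩ ∧ dX u ⟨0, Set.mem_insert 0 _⟩ < ε := by
    intro ε hε
    obtain ⟨n, hn⟩ := (hx0.eventually (gt_mem_nhds hε)).exists
    refine ⟨⟨x n, Set.mem_insert_of_mem _ ⟨n, rfl⟩⟩, ?_, ?_⟩
    · exact fun h => (hxpos n).ne' (congrArg Subtype.val h)
    · rw [hdX, if_neg (fun h => (hxpos n).ne' (congrArg Subtype.val h))]
      simpa [max_eq_left (hxpos n).le] using hn
  -- Y is uniformly discrete with gap p
  have hdisc : ∀ v w : ↥(insert p (Set.range y)), dY v w < p → w = v := by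
    intro v w hvw
    by_contra hne
    rw [hdY, if_neg (Ne.symm hne)] at hvw
    exact absurd hvw (not_lt.2 (le_max_of_le_left (hYge v)))
  refine ⟨hXprops, hYprops, ?_, hlim, ?_, ?_⟩
  · -- weak similarity
    set Φ := Equiv.ofBijective _ hψbij with hΦdef
    have hΦapp : ∀ u, Φ u = psiAux x y p u := fun u => rfl
    refine ⟨Φ, fAux x y, ?_, ?_, ?_⟩
    -- first compute the two spectra
    · have hSpX : {r | ∃ u v, dX u v = r} = insert (0:ℝ) (Set.range x) := by
        ext r
        constructor
        · rintro ⟨u, v, rfl⟩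
          rw [hdX]
          split_ifs with h
          · exact Set.mem_insert _ _
          · rcases max_choice u.1 v.1 with h1 | h1 <;> rw [h1]
            · exact u.2
            · exact v.2
        · rintro (rfl | ⟨n, rfl⟩)
          · exact ⟨⟨0, hz⟩, ⟨0, hz⟩, by rw [hdX, if_pos rfl]⟩
          · refine ⟨⟨x n, Set.mem_insert_of_mem _ ⟨n, rfl⟩⟩, ⟨0, hz⟩, ?_⟩
            rw [hdX, if_neg (fun h => (hxpos n).ne' (congrArg Subtype.val h))]
            exact max_eq_left (hxpos n).le
      rw [hSpX]
      intro a ha b hb hab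
      rcases ha with rfl | ⟨m, rfl⟩
      · rcases hb with rfl | ⟨n, rfl⟩
        · exact absurd hab (lt_irrefl 0)
        · rw [fAux_zero, fAux_x x y hxinj hxpos n]
          exact lt_trans hp (hygt n)
      · rcases hb with rfl | ⟨n, rfl⟩
        · exact absurd (lt_trans (hxpos m) hab) (lt_irrefl 0)
        · rw [fAux_x x y hxinj hxpos m, fAux_x x y hxinj hxpos n]
          exact hya (hxa.lt_iff_gt.mp hab)
    · -- image of the spectrum
      have hSpX : {r | ∃ u v, dX u v = r} = insert (0:ℝ) (Set.range x) := by
        ext r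
        constructor
        · rintro ⟨u, v, rfl⟩
          rw [hdX]
          split_ifs with h
          · exact Set.mem_insert _ _
          · rcases max_choice u.1 v.1 with h1 | h1 <;> rw [h1]
            · exact u.2
            · exact v.2
        · rintro (rfl | ⟨n, rfl⟩)
          · exact ⟨⟨0, hz⟩, ⟨0, hz⟩, by rw [hdX, if_pos rfl]⟩
          · refine ⟨⟨x n, Set.mem_insert_of_mem _ ⟨n, rfl⟩⟩, ⟨0, hz⟩, ?_⟩
            rw [hdX, if_neg (fun h => (hxpos n).ne' (congrArg Subtype.val h))]
            exact max_eq_left (hxpos n).le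
      have hSpY : {r | ∃ u v, dY u v = r} = insert (0:ℝ) (Set.range y) := by
        ext r
        constructor
        · rintro ⟨u, v, rfl⟩
          rw [hdY]
          split_ifs with h
          · exact Set.mem_insert _ _
          · right
            have hmem : max u.1 v.1 ∈ insert p (Set.range y) := by
              rcases max_choice u.1 v.1 with h1 | h1 <;> rw [h1]
              exacts [u.2, v.2]
            rcases hmem with hm | hm
            · exfalso
              apply h
              have hu : u.1 = p := le_antisymm ((le_max_left _ _).trans hm.le) (hYge u)
              have hv : v.1 = p := le_antisymm ((le_max_right _ _).trans hm.le) (hYge v)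
              exact Subtype.ext (hu.trans hv.symm)
            · exact hm
        · rintro (rfl | ⟨n, rfl⟩)
          · exact ⟨⟨p, Set.mem_insert _ _⟩, ⟨p, Set.mem_insert _ _⟩,
              by rw [hdY, if_pos rfl]⟩
          · refine ⟨⟨y n, Set.mem_insert_of_mem _ ⟨n, rfl⟩⟩, ⟨p, Set.mem_insert _ _⟩, ?_⟩
            rw [hdY, if_neg (fun h => (hygt n).ne' (congrArg Subtype.val h))]
            exact max_eq_left (hygt n).le
      rw [hSpX, hSpY, Set.image_insert_eq, fAux_zero, ← Set.range_comp]
      have : fAux x y ∘ x = y := funext (fAux_x x y hxinj hxpos)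
      rw [this]
    · -- compatibility
      intro u v
      rw [hdX, hdY]
      rcases eq_or_ne u v with rfl | h
      · rw [if_pos rfl, if_pos rfl]
        exact fAux_zero x y
      · have hΦne : Φ u ≠ Φ v := fun hh => h (Φ.injective hh)
        rw [if_neg h, if_neg hΦne]
        have key : ∀ a b : ↥(insert (0:ℝ) (Set.range x)), b.1 < a.1 →
            fAux x y (max a.1 b.1) = max (Φ a).1 (Φ b).1 := by
          intro a b hba
          rcases psiAux_spec x y p hxinj hxpos a with ⟨ha0, _⟩ | ⟨n, han, hay⟩
          · exfalso
            have h2 : a.1 ≤ b.1 := by rw [ha0]; exact hXnn b.1 b.2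
            exact absurd hba (not_lt.2 h2)
          · have hΦa : (Φ a).1 = y n := by rw [hΦapp]; exact hay
            have hΦb : (Φ b).1 < y n := by
              rcases psiAux_spec x y p hxinj hxpos b with ⟨_, hbp⟩ | ⟨m, hbm, hby⟩
              · rw [hΦapp, hbp]; exact hygt n
              · rw [hΦapp, hby]
                have : x m < x n := by rw [← hbm, ← han]; exact hba
                exact hya (hxa.lt_iff_gt.mp this)
            rw [max_eq_left hba.le, han, fAux_x x y hxinj hxpos n, hΦa,
              max_eq_left hΦb.le]
        have hval : u.1 ≠ v.1 := fun hh => h (Subtype.ext hh)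
        rcases lt_or_gt_of_ne hval with hlt | hlt
        · rw [max_comm u.1 v.1, max_comm (Φ u).1 (Φ v).1]
          exact key v u hlt
        · exact key u v hlt
  · -- Y is discrete
    exact fun v => ⟨p, hp, fun w hw => hdisc v w hw⟩
  · -- no homeomorphism
    rintro ⟨Φ, hc, -⟩
    obtain ⟨η, hη, hcont⟩ := hc ⟨0, hz⟩ p hp
    obtain ⟨u, hune, hud⟩ := hlim η hη
    have h1 : dY (Φ u) (Φ ⟨0, hz⟩) < p := hcont u hud
    have h2 : Φ u = Φ ⟨0, hz⟩ := hdisc _ _ (by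
      rw [hYprops.1] at h1; exact h1)
    exact hune (Φ.injective h2)
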